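/- Let p be an odd prime, G a finite abelian p-group with exponent p^{t_m}, and x ∈ G with x = 0. Then for 1 ≤ k < |G|, the incidence structure (G, B_k^0) is a 1-design if and only if p^{t_m} divides k, i.e., exp(G) divides k. -/

import Mathlib

open Finset Polynomial

/-- The family of `k`-element subsets of `G` whose elements sum to `x`. -/
def sumBlocks (G : Type) [AddCommGroup G] [Fintype G] [DecidableEq G]
    (k : ℕ) (x : G) : Finset (Finset G) :=
  Finset.univ.filter (fun T => T.card = k ∧ T.sum id = x)

/-- The family of `k`-element subsets of `G \ {0}` whose elements sum to `x`. -/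
def sumBlocksStar (G : Type) [AddCommGroup G] [Fintype G] [DecidableEq G]
    (k : ℕ) (x : G) : Finset (Finset G) :=
  Finset.univ.filter (fun T => T.card = k ∧ T.sum id = x ∧ (0 : G) ∉ T)

/-- `(G, B_k^x)` is a 1-design: the block family is nonempty and every
point of `G` lies in the same number of blocks. -/
def isOneDesign (G : Type) [AddCommGroup G] [Fintype G] [DecidableEq G]
    (k : ℕ) (x : G) : Prop :=
  sumBlocks G k x ≠ ∅ ∧ ∃ r : ℕ, ∀ y : G,
    ((sumBlocks G k x).filter (fun B => y ∈ B)).card = r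

/-- `e(x) = max {d : d ∣ exp(G), x ∈ dG}`. -/
noncomputable def eMax (G : Type) [AddCommGroup G] [Fintype G] [DecidableEq G] (x : G) : ℕ :=
  Nat.findGreatest (fun d => d ∣ AddMonoid.exponent G ∧ ∃ y : G, d • y = x)
    (AddMonoid.exponent G)

section Aux

variable {G : Type} [AddCommGroup G] [Fintype G] [DecidableEq G]

/-- The number of `m`-element subsets of `G \ {0}` with sum `x`. -/
private def starCount (G : Type) [AddCommGroup G] [Fintype G] [DecidableEq G]
    (m : ℕ) (x : G) : ℕ :=
  (((Finset.univ.erase (0 : G)).powersetCard m).filter (fun S => S.sum id = x)).card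

private lemma addChar_map_sum (χ : AddChar G ℂ) (S : Finset G) :
    χ (S.sum id) = ∏ g ∈ S, χ g := by
  classical
  induction S using Finset.cons_induction with
  | empty => simp
  | cons a s ha ih =>
      rw [Finset.sum_cons, AddChar.map_add_eq_mul, Finset.prod_cons, ih]
      rfl

private lemma image_mem_sumBlocks {k : ℕ} {x y : G} (c : G) {T : Finset G}
    (hT : T ∈ (sumBlocks G k x).filter (fun B => y ∈ B)) :
    T.image (fun g => g + c) ∈ (sumBlocks G k (x + k • c)).filter (fun B => (y + c) ∈ B) := by
  have hinj : Function.Injective (fun g : G => g + c) := add_left_injective c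
  simp only [sumBlocks, Finset.mem_filter, Finset.mem_univ, true_and] at hT ⊢
  obtain ⟨⟨hcard, hsum⟩, hy⟩ := hT
  refine ⟨⟨?_, ?_⟩, Finset.mem_image_of_mem _ hy⟩
  · rw [Finset.card_image_of_injective _ hinj, hcard]
  · rw [Finset.sum_image (fun a _ b _ h => hinj h)]
    simp only [id_eq]
    rw [Finset.sum_add_distrib, Finset.sum_const, hcard]
    show T.sum id + k • c = x + k • c
    rw [hsum]

private lemma card_filter_translate (k : ℕ) (x y c : G) :
    ((sumBlocks G k x).filter (fun B => y ∈ B)).card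
      = ((sumBlocks G k (x + k • c)).filter (fun B => (y + c) ∈ B)).card := by
  refine Finset.card_bij' (fun T _ => T.image (fun g => g + c))
    (fun T _ => T.image (fun g => g + (-c))) (fun T hT => image_mem_sumBlocks c hT)
    (fun T hT => ?_) (fun T hT => ?_) (fun T hT => ?_)
  · have h := image_mem_sumBlocks (-c) (y := y + c) (x := x + k • c) hT
    rw [smul_neg, add_neg_cancel_right, add_neg_cancel_right] at h
    exact h
  · rw [Finset.image_image]
    have : ((fun g : G => g + -c) ∘ fun g => g + c) = id := by
      funext g; simp
    rw [this, Finset.image_id]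
  · rw [Finset.image_image]
    have : ((fun g : G => g + c) ∘ fun g => g + -c) = id := by
      funext g; simp
    rw [this, Finset.image_id]

private lemma card_zero_mem_eq_starCount (k : ℕ) (hk : 1 ≤ k) (x : G) :
    ((sumBlocks G k x).filter (fun B => (0 : G) ∈ B)).card = starCount G (k - 1) x := by
  refine Finset.card_bij' (fun T _ => T.erase 0) (fun S _ => insert (0 : G) S)
    (fun T hT => ?_) (fun S hS => ?_) (fun T hT => ?_) (fun S hS => ?_)
  · simp only [sumBlocks, Finset.mem_filter, Finset.mem_univ, true_and] at hT
    obtain ⟨⟨hcard, hsum⟩, h0⟩ := hT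
    simp only [starCount, Finset.mem_filter, Finset.mem_powersetCard]
    refine ⟨⟨?_, ?_⟩, ?_⟩
    · intro g hg
      exact Finset.mem_erase.2 ⟨(Finset.mem_erase.1 hg).1, Finset.mem_univ g⟩
    · rw [Finset.card_erase_of_mem h0, hcard]
    · rw [Finset.sum_erase _ (by simp), hsum]
  · simp only [Finset.mem_filter, Finset.mem_powersetCard] at hS
    obtain ⟨⟨hsub, hcard⟩, hsum⟩ := hS
    have h0 : (0 : G) ∉ S := fun h => (Finset.mem_erase.1 (hsub h)).1 rfl
    simp only [sumBlocks, Finset.mem_filter, Finset.mem_univ, true_and]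
    refine ⟨⟨?_, ?_⟩, Finset.mem_insert_self _ _⟩
    · rw [Finset.card_insert_of_notMem h0, hcard]
      omega
    · rw [Finset.sum_insert h0, hsum]
      simp
  · simp only [sumBlocks, Finset.mem_filter] at hT
    exact Finset.insert_erase hT.2
  · simp only [starCount, Finset.mem_filter, Finset.mem_powersetCard] at hS
    have h0 : (0 : G) ∉ S := fun h => (Finset.mem_erase.1 (hS.1.1 h)).1 rfl
    exact Finset.erase_insert h0

private lemma r_eq_starCount (k : ℕ) (hk : 1 ≤ k) (y : G) :
    ((sumBlocks G k 0).filter (fun B => y ∈ B)).card = starCount G (k - 1) (k • (-y)) := by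
  have h := card_filter_translate (G := G) k 0 y (-y)
  rw [add_neg_cancel, zero_add] at h
  rw [h, card_zero_mem_eq_starCount k hk]

end Aux

section Poly

private lemma prod_one_add_coeff {ι : Type*} [DecidableEq ι] (s : Finset ι) (f : ι → ℂ) :
    ∀ m : ℕ, (∏ i ∈ s, (1 + C (f i) * X)).coeff m
      = ∑ t ∈ s.powersetCard m, ∏ i ∈ t, f i := by
  induction s using Finset.induction with
  | empty =>
      intro m
      cases m with
      | zero => simp
      | succ m =>
          rw [Finset.powersetCard_eq_empty.2 (by simp), Finset.sum_empty]
          simp [Polynomial.coeff_one]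
  | @insert a s ha ih =>
      intro m
      rw [Finset.prod_insert ha, add_mul, one_mul, coeff_add, mul_assoc]
      cases m with
      | zero =>
          simp [Polynomial.mul_coeff_zero, ih 0]
      | succ m =>
          rw [Polynomial.coeff_C_mul, Polynomial.coeff_X_mul, ih (m + 1), ih m,
            Finset.powersetCard_succ_insert ha, Finset.sum_union, Finset.sum_image]
          · have : ∀ t ∈ s.powersetCard m, ∏ i ∈ insert a t, f i = f a * ∏ i ∈ t, f i := by
              intro t ht
              have hat : a ∉ t := fun h =>
                ha ((Finset.mem_powersetCard.1 ht).1 h)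
              rw [Finset.prod_insert hat]
            rw [Finset.sum_congr rfl this, ← Finset.mul_sum]
          · intro t ht u hu htu
            have hat : a ∉ t := fun h => ha ((Finset.mem_powersetCard.1 ht).1 h)
            have hau : a ∉ u := fun h => ha ((Finset.mem_powersetCard.1 hu).1 h)
            rw [← Finset.erase_insert hat, ← Finset.erase_insert hau, htu]
          · rw [Finset.disjoint_left]
            intro t ht htim
            obtain ⟨u, hu, rfl⟩ := Finset.mem_image.1 htim
            exact ha ((Finset.mem_powersetCard.1 ht).1 (Finset.mem_insert_self a u))

private lemma one_add_X_mul_geom {q : ℕ} (hodd : Odd q) :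
    ((1 : ℂ[X]) + X) * ∑ i ∈ Finset.range q, (-X : ℂ[X]) ^ i = 1 + X ^ q := by
  have h := geom_sum_mul (-X : ℂ[X]) q
  have hq : (-X : ℂ[X]) ^ q = -(X ^ q) := hodd.neg_pow X
  rw [hq] at h
  linear_combination -h

private lemma prod_nthRoots_one_add {q : ℕ} (hq : 0 < q) (hodd : Odd q) :
    ∏ z ∈ nthRootsFinset q (1 : ℂ), ((1 : ℂ[X]) + C z * X) = 1 + X ^ q := by
  obtain ⟨ζ, hζ⟩ : ∃ ζ : ℂ, IsPrimitiveRoot ζ q := ⟨_, Complex.isPrimitiveRoot_exp q hq.ne'⟩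
  have hcard := hζ.card_nthRootsFinset
  have key : ∀ t : ℂ, ∏ z ∈ nthRootsFinset q (1 : ℂ), (t - z) = t ^ q - 1 := by
    intro t
    have h := X_pow_sub_one_eq_prod hq hζ
    have := congrArg (Polynomial.eval t) h
    simpa [eval_prod] using this.symm
  apply Polynomial.funext
  intro r
  simp only [eval_prod, eval_add, eval_one, eval_mul, eval_C, eval_X, eval_pow]
  by_cases hr : r = 0
  · simp [hr, hq.ne']
  · have hstep : ∀ z ∈ nthRootsFinset q (1 : ℂ), (1 : ℂ) + z * r = (-r) * ((-r⁻¹) - z) := by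
      intro z _
      field_simp
      ring
    rw [Finset.prod_congr rfl hstep, Finset.prod_mul_distrib, Finset.prod_const, hcard, key]
    have h1 : (-r) ^ q = -(r ^ q) := hodd.neg_pow r
    have h2 : (-r⁻¹) ^ q = -(r⁻¹ ^ q) := hodd.neg_pow r⁻¹
    rw [h1, h2]
    have : r⁻¹ ^ q = (r ^ q)⁻¹ := by rw [inv_pow]
    rw [this]
    have hrq : r ^ q ≠ 0 := pow_ne_zero _ hr
    field_simp
    ring

private lemma coeff_geom_mul_pow (q N m : ℕ) (hq : 0 < q) :
    (((∑ i ∈ Finset.range q, (-X : ℂ[X]) ^ i) * (1 + X ^ q) ^ N)).coeff m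
      = (-1) ^ (m % q) * (N.choose (m / q) : ℂ) := by
  have hQcoeff : ∀ d : ℕ, (∑ i ∈ Finset.range q, (-X : ℂ[X]) ^ i).coeff d
      = if d < q then (-1 : ℂ) ^ d else 0 := by
    intro d
    have hterm : ∀ i : ℕ, ((-X : ℂ[X]) ^ i).coeff d = if d = i then (-1 : ℂ) ^ d else 0 := by
      intro i
      have hxi : (-X : ℂ[X]) ^ i = C ((-1 : ℂ) ^ i) * X ^ i := by
        rw [C_pow, C_neg, C_1, ← mul_pow, neg_one_mul]
      rw [hxi, Polynomial.coeff_C_mul, Polynomial.coeff_X_pow, mul_ite, mul_one, mul_zero]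
      split_ifs with h
      · rw [h]
      · rfl
    rw [Polynomial.finset_sum_coeff, Finset.sum_congr rfl (fun i _ => hterm i),
      Finset.sum_ite_eq (Finset.range q) d (fun _ => (-1 : ℂ) ^ d)]
    simp [Finset.mem_range]
  have hexp : ((1 : ℂ[X]) + X ^ q) ^ N
      = ∑ j ∈ Finset.range (N + 1), C ((N.choose j : ℂ)) * X ^ (q * j) := by
    rw [add_comm, add_pow]
    refine Finset.sum_congr rfl fun j hj => ?_
    rw [one_pow, mul_one, ← pow_mul, Polynomial.C_eq_natCast]
    ring
  rw [hexp, Finset.mul_sum, Polynomial.finset_sum_coeff]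
  have hterm2 : ∀ j : ℕ,
      ((∑ i ∈ Finset.range q, (-X : ℂ[X]) ^ i) * (C ((N.choose j : ℂ)) * X ^ (q * j))).coeff m
        = if q * j ≤ m ∧ m - q * j < q then (N.choose j : ℂ) * (-1) ^ (m - q * j) else 0 := by
    intro j
    rw [mul_left_comm, Polynomial.coeff_C_mul, Polynomial.coeff_mul_X_pow', hQcoeff]
    by_cases h1 : q * j ≤ m <;> by_cases h2 : m - q * j < q <;> simp [h1, h2]
  rw [Finset.sum_congr rfl (fun j _ => hterm2 j)]
  rw [Finset.sum_eq_single (m / q) ?hA ?hB]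
  · have h1 : q * (m / q) ≤ m := Nat.mul_div_le m q
    have h2 : m - q * (m / q) = m % q := by
      have := Nat.mod_add_div m q; omega
    rw [if_pos ⟨h1, by rw [h2]; exact Nat.mod_lt _ hq⟩, h2, mul_comm]
  case hA =>
    intro j hj hne
    rw [if_neg]
    rintro ⟨ha, hb⟩
    apply hne
    have hlo : j * q ≤ m := by rw [mul_comm]; exact ha
    have hhi : m < (j + 1) * q := by
      rw [add_one_mul, mul_comm j q]
      omega
    exact (Nat.div_eq_of_lt_le hlo hhi).symm
  case hB =>
    intro h
    have hlt : N < m / q := by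
      have := Finset.mem_range.2 (Nat.lt_succ_of_le (le_refl (m / q)))
      by_contra hcon
      exact h (Finset.mem_range.2 (by omega))
    rw [Nat.choose_eq_zero_of_lt hlt]
    simp

end Poly

section Main

variable {G : Type} [AddCommGroup G] [Fintype G] [DecidableEq G]

private lemma fiber_card_eq (χ : AddChar G ℂ) {z : ℂ} (hz : ∃ g₀ : G, χ g₀ = z) :
    (Finset.univ.filter fun g : G => χ g = z).card
      = (Finset.univ.filter fun g : G => χ g = 1).card := by
  obtain ⟨g₀, hg₀⟩ := hz
  have hzne : z ≠ 0 := hg₀ ▸ (χ.val_isUnit g₀).ne_zero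
  refine Finset.card_bij' (fun g _ => g - g₀) (fun g _ => g + g₀) ?_ ?_ ?_ ?_
  · intro g hg
    simp only [Finset.mem_filter, Finset.mem_univ, true_and] at hg ⊢
    rw [AddChar.map_sub_eq_div, hg, hg₀, div_self hzne]
  · intro g hg
    simp only [Finset.mem_filter, Finset.mem_univ, true_and] at hg ⊢
    rw [AddChar.map_add_eq_mul, hg, hg₀, one_mul]
  · intro g _; simp
  · intro g _; simp

private lemma prod_univ_addChar (χ : AddChar G ℂ) {q : ℕ} (hq : 0 < q) (hodd : Odd q)
    (hqsmul : ∀ g : G, q • g = 0) {c : G} (hprim : IsPrimitiveRoot (χ c) q) :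
    (∏ g : G, ((1 : ℂ[X]) + C (χ g) * X))
        = (1 + X ^ q) ^ (Finset.univ.filter fun g : G => χ g = 1).card ∧
      Fintype.card G = q * (Finset.univ.filter fun g : G => χ g = 1).card := by
  haveI : NeZero q := ⟨hq.ne'⟩
  have hmaps : ∀ g : G, g ∈ Finset.univ → χ g ∈ nthRootsFinset q (1 : ℂ) := by
    intro g _
    rw [mem_nthRootsFinset hq, ← AddChar.map_nsmul_eq_pow, hqsmul, AddChar.map_zero_eq_one]
  have hfib : ∀ z ∈ nthRootsFinset q (1 : ℂ), ∃ g₀ : G, χ g₀ = z := by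
    intro z hz
    obtain ⟨i, _, hi⟩ := hprim.eq_pow_of_pow_eq_one ((mem_nthRootsFinset hq 1).1 hz)
    exact ⟨i • c, by rw [AddChar.map_nsmul_eq_pow, hi]⟩
  have hinner : ∀ z ∈ nthRootsFinset q (1 : ℂ),
      ∏ g ∈ Finset.univ.filter (fun g : G => χ g = z), ((1 : ℂ[X]) + C (χ g) * X)
        = ((1 : ℂ[X]) + C z * X) ^ (Finset.univ.filter fun g : G => χ g = 1).card := by
    intro z hz
    have hcongr : ∀ g ∈ Finset.univ.filter (fun g : G => χ g = z),
        ((1 : ℂ[X]) + C (χ g) * X) = ((1 : ℂ[X]) + C z * X) := by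
      intro g hg
      rw [(Finset.mem_filter.1 hg).2]
    rw [Finset.prod_congr rfl hcongr, Finset.prod_const, fiber_card_eq χ (hfib z hz)]
  constructor
  · rw [← Finset.prod_fiberwise_of_maps_to hmaps (fun g : G => ((1 : ℂ[X]) + C (χ g) * X)),
      Finset.prod_congr rfl hinner, Finset.prod_pow, prod_nthRoots_one_add hq hodd]
  · have h1 : Fintype.card G = ∑ z ∈ nthRootsFinset q (1 : ℂ),
        (Finset.univ.filter (fun g : G => χ g = z)).card := by
      rw [← Finset.card_univ]
      exact Finset.card_eq_sum_card_fiberwise hmaps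
    rw [h1, Finset.sum_congr rfl (fun z hz => fiber_card_eq χ (hfib z hz)),
      Finset.sum_const, hprim.card_nthRootsFinset, smul_eq_mul]

/-- Main nonconstancy lemma: the counts of `m`-subsets of `G \ {0}` summing to `0`
and to a nonzero element of `p^(tm-1) • G` differ. -/
private lemma starCount_ne {p tm : ℕ} (hp : p.Prime) (hodd : Odd p) (htm : 1 ≤ tm)
    (hexp : AddMonoid.exponent G = p ^ tm) {m : ℕ} (hm : m < Fintype.card G)
    {c : G} (hc : addOrderOf c = p ^ tm) :
    starCount G m (p ^ (tm - 1) • c) ≠ starCount G m 0 := by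
  classical
  set q : ℕ := p ^ tm with hq_def
  have hq : 0 < q := pow_pos hp.pos tm
  have hqodd : Odd q := hodd.pow
  have hqsmul : ∀ g : G, q • g = 0 := fun g => by
    rw [← hexp]; exact AddMonoid.exponent_nsmul_eq_zero g
  set v : G := p ^ (tm - 1) • c with hv_def
  have hvne : v ≠ 0 := by
    intro h
    have hdvd : addOrderOf c ∣ p ^ (tm - 1) := addOrderOf_dvd_of_nsmul_eq_zero h
    rw [hc] at hdvd
    have hle := Nat.le_of_dvd (pow_pos hp.pos _) hdvd
    have hlt : p ^ (tm - 1) < p ^ tm := Nat.pow_lt_pow_right hp.one_lt (by omega)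
    omega
  set n := Fintype.card G with hn_def
  -- primitive root from any character not vanishing on v
  have hprim_of : ∀ χ : AddChar G ℂ, χ v ≠ 1 → IsPrimitiveRoot (χ c) q := by
    intro χ hχv
    have hzq : (χ c) ^ q = 1 := by
      rw [← AddChar.map_nsmul_eq_pow, hqsmul, AddChar.map_zero_eq_one]
    have hz' : (χ c) ^ (p ^ (tm - 1)) ≠ 1 := by
      rw [← AddChar.map_nsmul_eq_pow]; exact hχv
    have hord : orderOf (χ c) = q := by
      have hdvd : orderOf (χ c) ∣ q := orderOf_dvd_of_pow_eq_one hzq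
      rw [hq_def] at hdvd
      obtain ⟨j, hj, hjeq⟩ := (Nat.dvd_prime_pow hp).1 hdvd
      rcases Nat.lt_or_ge j tm with hlt | hge
      · exfalso
        apply hz'
        apply orderOf_dvd_iff_pow_eq_one.1
        rw [hjeq]
        exact pow_dvd_pow p (by omega)
      · rw [hjeq, hq_def]
        congr 1
        omega
    exact ⟨hzq, fun l hl => hord ▸ orderOf_dvd_of_pow_eq_one hl⟩
  -- q divides n
  obtain ⟨χ₀, hχ₀⟩ : ∃ χ : AddChar G ℂ, χ v ≠ 1 := AddChar.exists_apply_ne_zero.2 hvne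
  have hqn : n = q * (n / q) := by
    obtain ⟨-, hcard⟩ := prod_univ_addChar χ₀ hq hqodd hqsmul (hprim_of χ₀ hχ₀)
    rw [← hn_def] at hcard
    rw [hcard, Nat.mul_div_cancel_left _ hq]
  -- Step A : value of the character sum over star subsets
  set SS := (Finset.univ.erase (0 : G)).powersetCard m with hSS
  set estar : ℂ := (-1) ^ (m % q) * ((n / q - 1).choose (m / q) : ℂ) with hestar
  have stepA : ∀ χ : AddChar G ℂ, χ v ≠ 1 → ∑ S ∈ SS, ∏ g ∈ S, χ g = estar := by
    intro χ hχv
    obtain ⟨hprod, hcardn⟩ := prod_univ_addChar χ hq hqodd hqsmul (hprim_of χ hχv)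
    set κ := (Finset.univ.filter fun g : G => χ g = 1).card with hκ
    have hκpos : 0 < κ := Finset.card_pos.2 ⟨0, by simp⟩
    have hP : ((1 : ℂ[X]) + X) * ∏ g ∈ Finset.univ.erase (0 : G), ((1 : ℂ[X]) + C (χ g) * X)
        = (1 + X ^ q) ^ κ := by
      rw [← hprod, ← Finset.mul_prod_erase Finset.univ _ (Finset.mem_univ (0 : G)),
        AddChar.map_zero_eq_one, map_one, one_mul]
    have hPQ : ∏ g ∈ Finset.univ.erase (0 : G), ((1 : ℂ[X]) + C (χ g) * X)
        = (∑ i ∈ Finset.range q, (-X : ℂ[X]) ^ i) * (1 + X ^ q) ^ (κ - 1) := by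
      have hc1 : ((1 : ℂ[X]) + X) ≠ 0 := by
        intro h
        have := congrArg (Polynomial.eval 1) h
        norm_num at this
      apply mul_left_cancel₀ hc1
      rw [hP, ← mul_assoc, one_add_X_mul_geom hqodd]
      have hκsucc : κ = (κ - 1) + 1 := by omega
      conv_lhs => rw [hκsucc]
      rw [pow_succ]
      ring
    have hE : ∑ S ∈ SS, ∏ g ∈ S, χ g
        = (-1) ^ (m % q) * ((κ - 1).choose (m / q) : ℂ) := by
      rw [hSS, ← prod_one_add_coeff, hPQ, coeff_geom_mul_pow _ _ _ hq]
    rw [hE, hestar]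
    have hκn : n / q = κ := by
      rw [← hn_def] at hcardn
      rw [hcardn, Nat.mul_div_cancel_left _ hq]
    rw [hκn]
  -- Step B : Fourier counting
  have count1 : ∀ x : G, ∑ χ : AddChar G ℂ, (∑ S ∈ SS, χ (S.sum id - x))
      = (n : ℂ) * (starCount G m x : ℂ) := by
    intro x
    rw [Finset.sum_comm]
    have h1 : ∀ S ∈ SS, ∑ χ : AddChar G ℂ, χ (S.sum id - x)
        = if S.sum id = x then (n : ℂ) else 0 := by
      intro S _
      rw [AddChar.sum_apply_eq_ite (S.sum id - x)]
      by_cases h : S.sum id = x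
      · rw [if_pos (by rw [h, sub_self]), if_pos h, hn_def]
      · rw [if_neg (fun hh => h (by rwa [sub_eq_zero] at hh)), if_neg h]
    have hsc : starCount G m x = (SS.filter (fun S => S.sum id = x)).card := rfl
    rw [Finset.sum_congr rfl h1, ← Finset.sum_filter, Finset.sum_const, nsmul_eq_mul,
      mul_comm, hsc]
  have hdiff : (n : ℂ) * (starCount G m 0 : ℂ) - (n : ℂ) * (starCount G m v : ℂ)
      = ∑ χ : AddChar G ℂ, (1 - χ (-v)) * (∑ S ∈ SS, ∏ g ∈ S, χ g) := by
    rw [← count1 0, ← count1 v, ← Finset.sum_sub_distrib]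
    refine Finset.sum_congr rfl fun χ _ => ?_
    rw [Finset.mul_sum, ← Finset.sum_sub_distrib]
    refine Finset.sum_congr rfl fun S _ => ?_
    rw [sub_zero, sub_eq_add_neg (S.sum id) v, AddChar.map_add_eq_mul, ← addChar_map_sum]
    ring
  have hrhs : ∑ χ : AddChar G ℂ, (1 - χ (-v)) * (∑ S ∈ SS, ∏ g ∈ S, χ g)
      = (n : ℂ) * estar := by
    have hpt : ∀ χ : AddChar G ℂ, (1 - χ (-v)) * (∑ S ∈ SS, ∏ g ∈ S, χ g)
        = (1 - χ (-v)) * estar := by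
      intro χ
      by_cases hχ : χ (-v) = 1
      · rw [hχ]; ring
      · have hχv : χ v ≠ 1 := by
          intro h
          apply hχ
          rw [AddChar.map_neg_eq_inv, h, inv_one]
        rw [stepA χ hχv]
    rw [Finset.sum_congr rfl (fun χ _ => hpt χ), ← Finset.sum_mul]
    have hsum1 : ∑ χ : AddChar G ℂ, ((1 : ℂ) - χ (-v)) = (n : ℂ) := by
      rw [Finset.sum_sub_distrib, Finset.sum_const, AddChar.sum_apply_eq_ite,
        if_neg (neg_ne_zero.2 hvne)]
      rw [Finset.card_univ, AddChar.card_eq, ← hn_def]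
      simp
    rw [hsum1]
  -- conclude
  intro heq
  rw [heq] at hdiff
  have h0 : (n : ℂ) * estar = 0 := by rw [← hrhs, ← hdiff]; ring
  have hn0 : (n : ℂ) ≠ 0 := Nat.cast_ne_zero.2 Fintype.card_ne_zero
  have hestar0 : estar = 0 := by
    rcases mul_eq_zero.1 h0 with h | h
    · exact absurd h hn0
    · exact h
  have hchoosepos : 0 < (n / q - 1).choose (m / q) := by
    apply Nat.choose_pos
    have hmq : m / q < n / q := by
      apply Nat.div_lt_div_of_lt_of_dvd ⟨n / q, hqn⟩ hm
    omega
  rw [hestar] at hestar0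
  rcases mul_eq_zero.1 hestar0 with h | h
  · exact pow_ne_zero _ (neg_ne_zero.2 one_ne_zero) h
  · rw [Nat.cast_eq_zero] at h
    omega

end Main

theorem stmt5 (p tm : ℕ) (hp : p.Prime) (hodd : Odd p)
    (G : Type) [AddCommGroup G] [Fintype G] [DecidableEq G]
    (hexp : AddMonoid.exponent G = p ^ tm)
    (k : ℕ) (hk1 : 1 ≤ k) (hkn : k < Fintype.card G) :
    isOneDesign G k (0 : G) ↔ p ^ tm ∣ k := by
  classical
  have hn1 : 1 < Fintype.card G := lt_of_le_of_lt hk1 hkn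
  have htm : 1 ≤ tm := by
    by_contra h
    have htm0 : tm = 0 := by omega
    rw [htm0, pow_zero] at hexp
    have hall : ∀ g : G, g = 0 := fun g => by
      have h1 := AddMonoid.exponent_nsmul_eq_zero (G := G) g
      rwa [hexp, one_nsmul] at h1
    have := Fintype.card_le_one_iff.2 (fun a b => by rw [hall a, hall b])
    omega
  obtain ⟨c, hc⟩ := AddMonoid.exists_addOrderOf_eq_exponent
    (AddMonoid.ExponentExists.of_finite (G := G))
  rw [hexp] at hc
  have hq : 0 < p ^ tm := pow_pos hp.pos tm
  have hq1 : 1 < p ^ tm := by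
    calc 1 < p := hp.one_lt
    _ ≤ p ^ tm := Nat.le_self_pow (by omega) p
  constructor
  · rintro ⟨hne, r, hr⟩
    by_contra hndvd
    haveI : Fact p.Prime := ⟨hp⟩
    set s := padicValNat p k with hs
    have hsdvd : p ^ s ∣ k := pow_padicValNat_dvd
    have hslt : s < tm := by
      by_contra h
      exact hndvd (dvd_trans (pow_dvd_pow p (by omega)) hsdvd)
    set u := k / p ^ s with hu
    have hku : k = p ^ s * u := (Nat.mul_div_cancel' hsdvd).symm
    have hpu : ¬ p ∣ u := by
      intro hdvdp
      have hd1 : p ^ (s + 1) ∣ k := by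
        rw [hku, pow_succ]
        exact Nat.mul_dvd_mul (dvd_refl _) hdvdp
      rcases (padicValNat_dvd_iff (s + 1) k).1 hd1 with h0 | hle
      · omega
      · omega
    have hcopu : Nat.Coprime u (p ^ tm) :=
      ((Nat.Prime.coprime_iff_not_dvd hp).2 hpu).symm.pow_right tm
    obtain ⟨w, -, hw⟩ := Nat.exists_mul_mod_eq_one_of_coprime hcopu hq1
    set y₀ : G := (w * p ^ (tm - 1 - s)) • c with hy₀
    have hky₀ : k • y₀ = p ^ (tm - 1) • c := by
      rw [hy₀, ← mul_nsmul]
      have hmod : w * p ^ (tm - 1 - s) * k ≡ p ^ (tm - 1) [MOD p ^ tm] := by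
        have hps : p ^ s * p ^ (tm - 1 - s) = p ^ (tm - 1) := by
          rw [← pow_add]; congr 1; omega
        have h1 : w * p ^ (tm - 1 - s) * k = (u * w) * p ^ (tm - 1) := by
          rw [hku, ← hps]; ring
        rw [h1]
        have h2 : u * w ≡ 1 [MOD p ^ tm] := by
          unfold Nat.ModEq
          rw [hw, Nat.one_mod_eq_one.2 (by omega)]
        calc (u * w) * p ^ (tm - 1) ≡ 1 * p ^ (tm - 1) [MOD p ^ tm] := h2.mul_right _
        _ = p ^ (tm - 1) := one_mul _
      exact (nsmul_eq_nsmul_iff_modEq (x := c)).2 (by rwa [hc])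
    have h1 : starCount G (k - 1) (k • (-y₀)) = starCount G (k - 1) 0 := by
      rw [← r_eq_starCount k hk1 y₀]
      have h0 := r_eq_starCount (G := G) k hk1 0
      rw [neg_zero, smul_zero] at h0
      rw [← h0, hr y₀, hr 0]
    have h2 : k • (-y₀) = p ^ (tm - 1) • (-c) := by
      rw [smul_neg, hky₀, smul_neg]
    rw [h2] at h1
    exact starCount_ne hp hodd htm hexp (by omega : k - 1 < Fintype.card G)
      (by rw [addOrderOf_neg]; exact hc) h1
  · intro hdvd
    have hqodd : Odd (p ^ tm) := hodd.pow
    have hksmul : ∀ z : G, k • z = 0 := by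
      intro z
      obtain ⟨t, rfl⟩ := hdvd
      rw [mul_nsmul]
      rw [show (p ^ tm : ℕ) • z = 0 from by
        rw [← hexp]; exact AddMonoid.exponent_nsmul_eq_zero z]
      rw [smul_zero]
    constructor
    · -- nonemptiness : a union of k / p^tm cosets of ⟨c⟩ is a zero-sum k-set
      set H : AddSubgroup G := AddSubgroup.zmultiples c with hH
      haveI : Fintype (G ⧸ H) := Fintype.ofFinite _
      have hcardH : Nat.card H = p ^ tm := by rw [Nat.card_zmultiples, hc]
      have hcardmul : Fintype.card (G ⧸ H) * p ^ tm = Fintype.card G := by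
        rw [← hcardH, ← Nat.card_eq_fintype_card (α := G ⧸ H),
          ← Nat.card_eq_fintype_card (α := G)]
        exact (AddSubgroup.card_eq_card_quotient_mul_card_addSubgroup H).symm
      have hHfin : ∀ g₀ : G, (Finset.univ.filter (fun g : G => -g₀ + g ∈ H)).card = p ^ tm
          ∧ (Finset.univ.filter (fun g : G => -g₀ + g ∈ H)).sum id = 0 := by
        intro g₀
        have hsumH : ∑ h ∈ (H : Set G).toFinset, h = 0 := by
          have hneg : ∑ h ∈ (H : Set G).toFinset, h = ∑ h ∈ (H : Set G).toFinset, (-h) := by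
            refine Finset.sum_nbij' (fun h => -h) (fun h => -h) ?_ ?_ ?_ ?_ ?_
            · intro a ha; simp only [Set.mem_toFinset] at ha ⊢; exact H.neg_mem ha
            · intro a ha; simp only [Set.mem_toFinset] at ha ⊢; exact H.neg_mem ha
            · intro a _; simp
            · intro a _; simp
            · intro a _; simp
          have h2 : (2 : ℕ) • (∑ h ∈ (H : Set G).toFinset, h) = 0 := by
            rw [two_nsmul]
            nth_rewrite 2 [hneg]
            rw [← Finset.sum_add_distrib]
            simp
          have hd2 : addOrderOf (∑ h ∈ (H : Set G).toFinset, h) ∣ 2 :=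
            addOrderOf_dvd_of_nsmul_eq_zero h2
          have hdq : addOrderOf (∑ h ∈ (H : Set G).toFinset, h) ∣ p ^ tm := by
            apply addOrderOf_dvd_of_nsmul_eq_zero
            rw [← hexp]; exact AddMonoid.exponent_nsmul_eq_zero _
          have hcop2 : Nat.Coprime 2 (p ^ tm) :=
            (Nat.prime_two.coprime_iff_not_dvd).2
              (fun hdd => (Nat.not_even_iff_odd.2 hqodd) (even_iff_two_dvd.2 hdd))
          have hdvd1 : addOrderOf (∑ h ∈ (H : Set G).toFinset, h) ∣ 1 := by
            have := Nat.dvd_gcd hd2 hdq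
            rwa [Nat.Coprime.gcd_eq_one hcop2] at this
          rw [← AddMonoid.addOrderOf_eq_one_iff]
          exact Nat.dvd_one.1 hdvd1
        constructor
        · have hcard2 : (Finset.univ.filter (fun g : G => -g₀ + g ∈ H)).card
              = (H : Set G).toFinset.card := by
            refine Finset.card_bij' (fun g _ => -g₀ + g) (fun h _ => g₀ + h) ?_ ?_ ?_ ?_
            · intro g hg
              simp only [Finset.mem_filter] at hg
              simpa using hg.2
            · intro h hh
              simp only [Set.mem_toFinset] at hh
              simp only [Finset.mem_filter, Finset.mem_univ, true_and, neg_add_cancel_left]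
              exact hh
            · intro g _; simp
            · intro h _; simp
          rw [hcard2, ← hcardH, Nat.card_eq_fintype_card, Set.toFinset_card]
          exact Fintype.card_congr (Equiv.setCongr rfl)
        · have hsum2 : (Finset.univ.filter (fun g : G => -g₀ + g ∈ H)).sum id
              = ∑ h ∈ (H : Set G).toFinset, (g₀ + h) := by
            refine Finset.sum_nbij' (fun g => -g₀ + g) (fun h => g₀ + h) ?_ ?_ ?_ ?_ ?_
            · intro g hg
              simp only [Finset.mem_filter] at hg
              simpa using hg.2
            · intro h hh
              simp only [Set.mem_toFinset] at hh
              simp only [Finset.mem_filter, Finset.mem_univ, true_and, neg_add_cancel_left]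
              exact hh
            · intro g _; simp
            · intro h _; simp
            · intro g _; simp
          rw [hsum2, Finset.sum_add_distrib, Finset.sum_const, hsumH, add_zero]
          have hcc : ((H : Set G)).toFinset.card = p ^ tm := by
            rw [← hcardH, Nat.card_eq_fintype_card, Set.toFinset_card]
            exact Fintype.card_congr (Equiv.setCongr rfl)
          rw [hcc, ← hexp]
          exact AddMonoid.exponent_nsmul_eq_zero g₀
      have hfib : ∀ z : G ⧸ H, (Finset.univ.filter
            (fun g : G => (QuotientAddGroup.mk g : G ⧸ H) = z)).card = p ^ tm
          ∧ (Finset.univ.filter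
            (fun g : G => (QuotientAddGroup.mk g : G ⧸ H) = z)).sum id = 0 := by
        intro z
        obtain ⟨g₀, hg₀⟩ := QuotientAddGroup.mk_surjective z
        have hmem : ∀ g : G, ((QuotientAddGroup.mk g : G ⧸ H) = z) ↔ -g₀ + g ∈ H := by
          intro g
          rw [← hg₀]
          constructor
          · intro hgz; exact (QuotientAddGroup.eq).1 hgz.symm
          · intro hmm; exact ((QuotientAddGroup.eq).2 hmm).symm
        rw [show (Finset.univ.filter (fun g : G => (QuotientAddGroup.mk g : G ⧸ H) = z))
            = Finset.univ.filter (fun g : G => -g₀ + g ∈ H) from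
          Finset.filter_congr (fun g _ => hmem g)]
        exact hHfin g₀
      have hcardQuot : Fintype.card (G ⧸ H) = Fintype.card G / p ^ tm := by
        rw [← hcardmul, Nat.mul_div_cancel _ hq]
      have hle : k / p ^ tm ≤ Finset.univ.card (α := G ⧸ H) := by
        rw [Finset.card_univ, hcardQuot]
        exact Nat.div_le_div_right (le_of_lt hkn)
      obtain ⟨Q, hQsub, hQcard⟩ := Finset.exists_subset_card_eq hle
      set T := Finset.univ.filter (fun g : G => (QuotientAddGroup.mk g : G ⧸ H) ∈ Q) with hT
      have hmapsT : ∀ g ∈ T, (QuotientAddGroup.mk g : G ⧸ H) ∈ Q :=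
        fun g hg => (Finset.mem_filter.1 hg).2
      have hfibT : ∀ z ∈ Q, T.filter (fun g : G => (QuotientAddGroup.mk g : G ⧸ H) = z)
          = Finset.univ.filter (fun g : G => (QuotientAddGroup.mk g : G ⧸ H) = z) := by
        intro z hz
        rw [hT, Finset.filter_filter]
        apply Finset.filter_congr
        intro g _
        constructor
        · rintro ⟨_, h⟩; exact h
        · intro h; exact ⟨h ▸ hz, h⟩
      have hTcard : T.card = k := by
        rw [Finset.card_eq_sum_card_fiberwise hmapsT,
          Finset.sum_congr rfl (fun z hz => by rw [hfibT z hz, (hfib z).1]),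
          Finset.sum_const, hQcard, smul_eq_mul, Nat.div_mul_cancel hdvd]
      have hTsum : T.sum id = 0 := by
        rw [← Finset.sum_fiberwise_of_maps_to hmapsT id,
          Finset.sum_congr rfl (fun z hz => by rw [hfibT z hz, (hfib z).2])]
        exact Finset.sum_const_zero
      have hTmem : T ∈ sumBlocks G k 0 := by
        simp only [sumBlocks, Finset.mem_filter, Finset.mem_univ, true_and]
        exact ⟨hTcard, hTsum⟩
      exact Finset.ne_empty_of_mem hTmem
    · refine ⟨((sumBlocks G k 0).filter (fun B => (0 : G) ∈ B)).card, fun y => ?_⟩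
      have h := card_filter_translate (G := G) k 0 y (-y)
      rw [add_neg_cancel, zero_add, hksmul (-y)] at h
      exact h
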